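/- Let S and B be real symmetric p×p matrices and ρ > 0. Let ρB − S = Q diag(μ₁, …, μ_p) Qᵀ be an orthogonal eigendecomposition, and define Θ̂ = Q diag(θ₁, …, θ_p) Qᵀ with θ_i = (μ_i + √(μ_i² + 4ρ))/(2ρ). Then Θ̂ is symmetric positive definite and is the unique minimizer over symmetric positive definite p×p matrices Θ of −log det Θ + tr(SΘ) + (ρ/2)‖Θ − B‖_F². -/

import Mathlib

open scoped Matrix

section helpers

variable {p : ℕ}

private lemma posdef_conj (C M : Matrix (Fin p) (Fin p) ℝ) (hM : M.PosDef)
    (hC : IsUnit C.det) : (C * M * Cᵀ).PosDef := by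
  have hMsymm : Mᵀ = M := by
    have := hM.isHermitian
    rwa [Matrix.IsHermitian, Matrix.conjTranspose_eq_transpose_of_trivial] at this
  refine Matrix.PosDef.of_dotProduct_mulVec_pos ?_ ?_
  · show (C * M * Cᵀ)ᴴ = _
    rw [Matrix.conjTranspose_eq_transpose_of_trivial, Matrix.transpose_mul, Matrix.transpose_mul,
      Matrix.transpose_transpose, hMsymm, Matrix.mul_assoc]
  · intro x hx
    have hCt : IsUnit Cᵀ.det := by rwa [Matrix.det_transpose]
    have hinj : Function.Injective (Cᵀ.mulVec) :=
      Matrix.mulVec_injective_iff_isUnit.mpr ((Matrix.isUnit_iff_isUnit_det _).mpr hCt)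
    have hy : Cᵀ *ᵥ x ≠ 0 := fun h => hx (hinj (by simpa using h))
    have h2 := hM.dotProduct_mulVec_pos hy
    have e : star x ⬝ᵥ ((C * M * Cᵀ) *ᵥ x) = star (Cᵀ *ᵥ x) ⬝ᵥ (M *ᵥ (Cᵀ *ᵥ x)) := by
      simp only [star_trivial]
      rw [Matrix.mul_assoc, ← Matrix.mulVec_mulVec, Matrix.dotProduct_mulVec,
        ← Matrix.mulVec_transpose, ← Matrix.mulVec_mulVec]
    rw [e]; exact h2

private lemma sum_mul_eq_trace (X D : Matrix (Fin p) (Fin p) ℝ) (hX : Xᵀ = X) :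
    ∑ i, ∑ j, D i j * X i j = (X * D).trace := by
  simp only [Matrix.trace, Matrix.diag, Matrix.mul_apply]
  rw [Finset.sum_comm]
  refine Finset.sum_congr rfl fun i _ => Finset.sum_congr rfl fun j _ => ?_
  rw [mul_comm]
  congr 1
  exact congrFun (congrFun hX i) j

private lemma logdet_le (A R Θ : Matrix (Fin p) (Fin p) ℝ) (hR : R.PosDef)
    (hRA : R * R = A) (hΘ : Θ.PosDef) :
    Real.log Θ.det ≤ Real.log A.det + (A⁻¹ * Θ).trace - p := by
  have hRdet : 0 < R.det := hR.det_pos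
  have hRu : IsUnit R.det := hRdet.ne'.isUnit
  have hRsymm : Rᵀ = R := by
    have := hR.isHermitian
    rwa [Matrix.IsHermitian, Matrix.conjTranspose_eq_transpose_of_trivial] at this
  have hRinvsymm : (R⁻¹)ᵀ = R⁻¹ := by rw [Matrix.transpose_nonsing_inv, hRsymm]
  set M := R⁻¹ * Θ * R⁻¹ with hMdef
  have hM : M.PosDef := by
    have := posdef_conj R⁻¹ Θ hΘ (Matrix.isUnit_nonsing_inv_det R hRu)
    rwa [hRinvsymm] at this
  set lam := hM.isHermitian.eigenvalues with hlamdef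
  have hlam : ∀ i, 0 < lam i := hM.eigenvalues_pos
  have hdetM : M.det = ∏ i, lam i := by
    simpa using hM.isHermitian.det_eq_prod_eigenvalues
  have htrM : M.trace = ∑ i, lam i := by
    nth_rewrite 1 [hM.isHermitian.spectral_theorem]
    rw [Unitary.conjStarAlgAut_apply, Matrix.trace_mul_cycle,
      Matrix.mem_unitaryGroup_iff'.mp (Matrix.IsHermitian.eigenvectorUnitary hM.isHermitian).2,
      one_mul, Matrix.trace_diagonal]
    simp
    rfl
  have hMtr : M.trace = (A⁻¹ * Θ).trace := by
    rw [hMdef, Matrix.trace_mul_cycle, ← hRA, Matrix.mul_inv_rev]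
  have h1 : M.det = R.det⁻¹ * Θ.det * R.det⁻¹ := by
    rw [hMdef, Matrix.det_mul, Matrix.det_mul, Matrix.det_nonsing_inv, Ring.inverse_eq_inv']
  have hAdet : A.det = R.det * R.det := by rw [← hRA, Matrix.det_mul]
  have hΘdet : Θ.det = M.det * A.det := by
    rw [h1, hAdet]; field_simp
  have hlog1 : Real.log Θ.det = Real.log M.det + Real.log A.det := by
    rw [hΘdet, Real.log_mul hM.det_pos.ne' (by rw [hAdet]; positivity)]
  have hlog2 : Real.log M.det = ∑ i, Real.log (lam i) := by
    rw [hdetM, Real.log_prod fun i _ => (hlam i).ne']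
  have hlog3 : ∑ i, Real.log (lam i) ≤ ∑ i, (lam i - 1) :=
    Finset.sum_le_sum fun i _ => Real.log_le_sub_one_of_pos (hlam i)
  have hsum : ∑ i, (lam i - 1) = M.trace - p := by
    rw [htrM, Finset.sum_sub_distrib]
    simp
  rw [hlog1, ← hMtr]
  linarith [hlog2, hlog3, hsum]

end helpers


/-- The Θ-minimization step of ADMM for the graphical lasso:
if `ρB − S = Q diag(μ) Qᵀ` with `Q` orthogonal and
`Θ̂ = Q diag(θ) Qᵀ` with `θᵢ = (μᵢ + √(μᵢ² + 4ρ))/(2ρ)`, then `Θ̂` is symmetric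
positive definite and is the unique minimizer of
`Θ ↦ −log det Θ + tr(SΘ) + (ρ/2)‖Θ − B‖_F²` over symmetric positive definite
matrices. -/
theorem stmt10 {p : ℕ} (S B : Matrix (Fin p) (Fin p) ℝ)
    (hSsymm : Sᵀ = S) (hBsymm : Bᵀ = B) (ρ : ℝ) (hρ : 0 < ρ)
    (Q : Matrix (Fin p) (Fin p) ℝ) (μ : Fin p → ℝ) (hQ : Q * Qᵀ = 1)
    (hdecomp : ρ • B - S = Q * Matrix.diagonal μ * Qᵀ)
    (Θhat : Matrix (Fin p) (Fin p) ℝ)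
    (hΘhat : Θhat =
      Q * Matrix.diagonal (fun i => (μ i + Real.sqrt ((μ i) ^ 2 + 4 * ρ)) / (2 * ρ)) * Qᵀ) :
    Θhat.PosDef ∧
      ∀ Θ : Matrix (Fin p) (Fin p) ℝ, Θ.PosDef → Θ ≠ Θhat →
        -Real.log Θhat.det + (S * Θhat).trace + ρ / 2 * ∑ i, ∑ j, (Θhat i j - B i j) ^ 2 <
          -Real.log Θ.det + (S * Θ).trace + ρ / 2 * ∑ i, ∑ j, (Θ i j - B i j) ^ 2 := by
  set θ : Fin p → ℝ := fun i => (μ i + Real.sqrt ((μ i) ^ 2 + 4 * ρ)) / (2 * ρ) with hθdef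
  have hs : ∀ i, Real.sqrt ((μ i) ^ 2 + 4 * ρ) ^ 2 = (μ i) ^ 2 + 4 * ρ :=
    fun i => Real.sq_sqrt (by positivity)
  have hθpos : ∀ i, 0 < θ i := by
    intro i
    have h1 : |μ i| < Real.sqrt ((μ i) ^ 2 + 4 * ρ) := by
      rw [← Real.sqrt_sq_eq_abs]
      exact Real.sqrt_lt_sqrt (sq_nonneg _) (by linarith)
    have h2 : -(μ i) ≤ |μ i| := neg_le_abs _
    have : 0 < μ i + Real.sqrt ((μ i) ^ 2 + 4 * ρ) := by linarith
    exact div_pos this (by linarith)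
  have hθeq : ∀ i, θ i * (ρ * θ i - μ i) = 1 := by
    intro i
    rw [hθdef]
    have h2ρ : (2 * ρ) ≠ 0 := by positivity
    field_simp
    nlinarith [hs i]
  have hQ' : Qᵀ * Q = 1 := mul_eq_one_comm.mp hQ
  have hQu : IsUnit Q.det := by
    have h1 : Q.det * Qᵀ.det = 1 := by rw [← Matrix.det_mul, hQ, Matrix.det_one]
    exact IsUnit.of_mul_eq_one _ h1
  -- collapse lemma for conjugated products
  have hcollapse : ∀ X Y : Matrix (Fin p) (Fin p) ℝ,
      (Q * X * Qᵀ) * (Q * Y * Qᵀ) = Q * (X * Y) * Qᵀ := by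
    intro X Y
    simp only [Matrix.mul_assoc]
    rw [← Matrix.mul_assoc Qᵀ Q, hQ', Matrix.one_mul]
  have hA : Θhat.PosDef := by
    rw [hΘhat]; exact posdef_conj Q _ (Matrix.PosDef.diagonal hθpos) hQu
  have hAsymm : Θhatᵀ = Θhat := by
    rw [hΘhat, Matrix.transpose_mul, Matrix.transpose_mul, Matrix.transpose_transpose,
      Matrix.diagonal_transpose, Matrix.mul_assoc]
  have hAu : IsUnit Θhat.det := hA.det_pos.ne'.isUnit
  -- the explicit inverse
  have hAinv : Θhat⁻¹ = ρ • Θhat - (ρ • B - S) := by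
    apply Matrix.inv_eq_right_inv
    rw [hdecomp, hΘhat]
    have h1 : ρ • (Q * Matrix.diagonal θ * Qᵀ) = Q * Matrix.diagonal (fun i => ρ * θ i) * Qᵀ := by
      rw [← Matrix.smul_mul, ← Matrix.mul_smul, ← Matrix.diagonal_smul]
      rfl
    rw [h1, ← Matrix.sub_mul, ← Matrix.mul_sub, Matrix.diagonal_sub, hcollapse,
      Matrix.diagonal_mul_diagonal]
    simp only [Pi.sub_apply, hθeq, Matrix.diagonal_one, Matrix.mul_one, hQ]
  have hAinvA : Θhat⁻¹ * Θhat = 1 := Matrix.nonsing_inv_mul _ hAu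
  -- square root of Θhat
  set Rm : Matrix (Fin p) (Fin p) ℝ := Q * Matrix.diagonal (fun i => Real.sqrt (θ i)) * Qᵀ
    with hRmdef
  have hRpos : Rm.PosDef :=
    posdef_conj Q _ (Matrix.PosDef.diagonal fun i => Real.sqrt_pos.mpr (hθpos i)) hQu
  have hRR : Rm * Rm = Θhat := by
    have hfn : (fun i => Real.sqrt (θ i) * Real.sqrt (θ i)) = θ :=
      funext fun i => Real.mul_self_sqrt (hθpos i).le
    rw [hRmdef, hcollapse, Matrix.diagonal_mul_diagonal, hfn, ← hΘhat]
  refine ⟨hA, fun Θ hΘ hne => ?_⟩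
  have hlog : Real.log Θ.det ≤ Real.log Θhat.det + (Θhat⁻¹ * Θ).trace - p :=
    logdet_le Θhat Rm Θ hRpos hRR hΘ
  -- positive quadratic term
  have hΔne : ∃ i j, (Θ - Θhat) i j ≠ 0 := by
    by_contra h
    push_neg at h
    exact hne (by ext i j; have := h i j; simpa [sub_eq_zero] using this)
  obtain ⟨i0, j0, hij⟩ := hΔne
  have hsq : 0 < ∑ i, ∑ j, ((Θ - Θhat) i j) ^ 2 := by
    refine Finset.sum_pos' (fun i _ => Finset.sum_nonneg fun j _ => sq_nonneg _)
      ⟨i0, Finset.mem_univ i0, Finset.sum_pos' (fun j _ => sq_nonneg _)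
        ⟨j0, Finset.mem_univ j0, by positivity⟩⟩
  -- expansion of the Frobenius term
  have htr1 : ∑ i, ∑ j, (Θ - Θhat) i j * (Θhat - B) i j = ((Θhat - B) * (Θ - Θhat)).trace :=
    sum_mul_eq_trace _ _ (by rw [Matrix.transpose_sub, hAsymm, hBsymm])
  have hexp : ∑ i, ∑ j, (Θ i j - B i j) ^ 2 =
      (∑ i, ∑ j, (Θhat i j - B i j) ^ 2) + ((∑ i, ∑ j, ((Θ - Θhat) i j) ^ 2)
        + 2 * ((Θhat - B) * (Θ - Θhat)).trace) := by
    rw [← htr1]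
    calc ∑ i, ∑ j, (Θ i j - B i j) ^ 2
        = ∑ i, ∑ j, ((Θhat i j - B i j) ^ 2 + (((Θ - Θhat) i j) ^ 2
            + 2 * ((Θ - Θhat) i j * (Θhat - B) i j))) := by
          refine Finset.sum_congr rfl fun i _ => Finset.sum_congr rfl fun j _ => ?_
          simp only [Matrix.sub_apply]
          ring
      _ = _ := by
          simp [Finset.sum_add_distrib, Finset.mul_sum]
  -- stationarity: Θhat⁻¹ = S + ρ • (Θhat - B)
  have hkey : Θhat⁻¹ = S + ρ • (Θhat - B) := by
    rw [hAinv, smul_sub]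
    abel
  have htr2 : (S * Θ).trace - (S * Θhat).trace + ρ * ((Θhat - B) * (Θ - Θhat)).trace
      = (Θhat⁻¹ * Θ).trace - p := by
    have h1 : (Θhat⁻¹ * Θ).trace - (p : ℝ) = ((S + ρ • (Θhat - B)) * (Θ - Θhat)).trace := by
      rw [← hkey, Matrix.mul_sub, Matrix.trace_sub, hAinvA, Matrix.trace_one]
      simp
    rw [h1]
    simp only [Matrix.add_mul, Matrix.smul_mul, Matrix.mul_sub, Matrix.trace_add,
      Matrix.trace_sub, Matrix.trace_smul, smul_eq_mul]
    ring
  rw [hexp]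
  have hpos : 0 < ρ / 2 * ∑ i, ∑ j, ((Θ - Θhat) i j) ^ 2 :=
    mul_pos (by linarith) hsq
  nlinarith [hlog, htr2, hpos]
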